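/- arXiv:2007.11854 — 2 statements merged into one kernel-verified Lean document; each statement's English description precedes it below -/
import Mathlib

section
/- Assume Hypotheses 1, 2 and 3. Then there is at most one classical solution of the stationary master equation; moreover, any classical solution is a monotone map on O_d. -/
open scoped RealInnerProductSpace
noncomputable section

/-- `ℝ^d` with the Euclidean inner product. -/
abbrev Euc (d : ℕ) := EuclideanSpace ℝ (Fin d)

/-- The positive orthant `O_d = (ℝ≥0)^d`. -/
def Od (d : ℕ) : Set (Euc d) := {x | ∀ i, 0 ≤ x i}

/-- `B_R = {x ∈ O_d : x_1 + ... + x_d ≤ R}`. -/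
def Ball1 (d : ℕ) (R : ℝ) : Set (Euc d) := {x | x ∈ Od d ∧ ∑ i, x i ≤ R}

/-- A C¹ map `U : O_d → ℝ^d` is a classical solution of the stationary master equation if
for every `x ∈ O_d` and `i`:
`r Uⁱ(x) + ⟨F(x,U(x)), ∇ₓ Uⁱ(x)⟩ + λ(Uⁱ(x) − (T* U(Tx))ⁱ) = Gⁱ(x,U(x))`. -/
def IsClassicalSolS (d : ℕ) (F G : Euc d → Euc d → Euc d) (r lam : ℝ)
    (T : Euc d →L[ℝ] Euc d) (U : Euc d → Euc d) : Prop :=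
  ContDiff ℝ 1 U ∧
  ∀ x ∈ Od d, ∀ i,
    r * U x i + fderiv ℝ (fun z : Euc d => U z i) x (F x (U x))
      + lam * (U x i - ContinuousLinearMap.adjoint T (U (T x)) i)
      = G x (U x) i

lemma ball1_compact (d : ℕ) (R : ℝ) : IsCompact (Ball1 d R) := by
  apply Metric.isCompact_of_isClosed_isBounded
  · have h1 : Ball1 d R = (⋂ i, {x : Euc d | 0 ≤ x i}) ∩ {x : Euc d | ∑ i, x i ≤ R} := by
      ext x; simp [Ball1, Od]
    rw [h1]
    refine IsClosed.inter (isClosed_iInter fun i => ?_) ?_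
    · exact isClosed_le continuous_const (EuclideanSpace.proj (𝕜 := ℝ) i).continuous
    · exact isClosed_le (continuous_finset_sum _ fun i _ =>
        (EuclideanSpace.proj (𝕜 := ℝ) i).continuous) continuous_const
  · rw [Metric.isBounded_iff_subset_closedBall 0]
    refine ⟨R, fun x hx => ?_⟩
    have hx1 : ∀ i, 0 ≤ x i := hx.1
    have hx2 : ∑ i, x i ≤ R := hx.2
    have hS : 0 ≤ ∑ i, x i := Finset.sum_nonneg fun i _ => hx1 i
    have hsq : ∑ i, (x i)^2 ≤ R^2 := by
      calc ∑ i, (x i)^2 ≤ ∑ i, x i * (∑ j, x j) := by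
            refine Finset.sum_le_sum fun i _ => ?_
            have : x i ≤ ∑ j, x j := Finset.single_le_sum (fun j _ => hx1 j) (Finset.mem_univ i)
            nlinarith [hx1 i]
        _ = (∑ i, x i) * (∑ j, x j) := by rw [← Finset.sum_mul]
        _ ≤ R^2 := by nlinarith
    have : ‖x‖ ≤ R := by
      rw [EuclideanSpace.norm_eq]
      have : √(∑ i, ‖x i‖^2) ≤ √(R^2) := by
        apply Real.sqrt_le_sqrt
        simpa [Real.norm_eq_abs, sq_abs] using hsq
      calc √(∑ i, ‖x i‖^2) ≤ √(R^2) := this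
        _ = R := by rw [Real.sqrt_sq (le_trans hS hx2)]
    simpa [Metric.mem_closedBall, dist_zero_right] using this

lemma deriv_nonneg_of_right_min {h : ℝ → ℝ} {D : ℝ} (hd : HasDerivAt h D 0)
    (hmin : ∀ᶠ t in nhdsWithin 0 (Set.Ioi 0), h 0 ≤ h t) : 0 ≤ D := by
  have h1 : HasDerivWithinAt h D (Set.Ioi 0) 0 := hd.hasDerivWithinAt
  rw [hasDerivWithinAt_iff_tendsto_slope] at h1
  have h2 : Set.Ioi (0:ℝ) \ {0} = Set.Ioi 0 := by
    ext t; simp +contextual [le_of_lt]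
  rw [h2] at h1
  refine ge_of_tendsto h1 ?_
  filter_upwards [hmin, self_mem_nhdsWithin] with t ht ht'
  have ht0 : (0:ℝ) < t := ht'
  rw [slope_def_field]
  apply div_nonneg (by linarith) (by linarith)

lemma fderiv_coord (d : ℕ) (U : Euc d → Euc d) (hU : ContDiff ℝ 1 U) (x v : Euc d) (i : Fin d) :
    fderiv ℝ (fun z => U z i) x v = fderiv ℝ U x v i := by
  have hfd : HasFDerivAt U (fderiv ℝ U x) x := (hU.differentiable one_ne_zero x).hasFDerivAt
  have h2 : HasFDerivAt (fun z => U z i) ((EuclideanSpace.proj (𝕜 := ℝ) i).comp (fderiv ℝ U x)) x :=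
    (EuclideanSpace.proj (𝕜 := ℝ) i).hasFDerivAt.comp x hfd
  rw [h2.fderiv]; rfl

lemma seg_mem (d : ℕ) (R : ℝ) (z v : Euc d) (hz : z ∈ Ball1 d R)
    (h1 : ∀ i, z i = 0 → 0 ≤ v i) (h2 : ∑ i, z i = R → ∑ i, v i ≤ 0) :
    ∀ᶠ t in nhdsWithin (0:ℝ) (Set.Ioi 0), z + t • v ∈ Ball1 d R := by
  have happ : ∀ (t : ℝ) i, (z + t • v) i = z i + t * v i := fun t i => rfl
  have hco : ∀ i, ∀ᶠ t in nhdsWithin (0:ℝ) (Set.Ioi 0), 0 ≤ (z + t • v) i := by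
    intro i
    rcases eq_or_lt_of_le (hz.1 i) with h | h
    · filter_upwards [self_mem_nhdsWithin] with t ht
      rw [happ]
      have hv := h1 i h.symm
      have ht0 : (0:ℝ) < t := ht
      nlinarith
    · have hcont : Filter.Tendsto (fun t : ℝ => z i + t * v i) (nhds 0) (nhds (z i)) := by
        have h' : Filter.Tendsto (fun t : ℝ => z i + t * v i) (nhds 0) (nhds (z i + 0 * v i)) := by
          exact (Continuous.tendsto (by continuity) 0)
        simpa using h'
      have hev : ∀ᶠ t in nhds (0:ℝ), 0 ≤ z i + t * v i := hcont.eventually (eventually_ge_nhds h)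
      exact (hev.filter_mono nhdsWithin_le_nhds).mono (fun t ht => by rw [happ]; exact ht)
  have hsum_eq : ∀ t : ℝ, ∑ i, (z + t • v) i = (∑ i, z i) + t * ∑ i, v i := by
    intro t
    simp only [happ, Finset.sum_add_distrib, Finset.mul_sum]
  have hsum : ∀ᶠ t in nhdsWithin (0:ℝ) (Set.Ioi 0), ∑ i, (z + t • v) i ≤ R := by
    rcases eq_or_lt_of_le hz.2 with h | h
    · filter_upwards [self_mem_nhdsWithin] with t ht
      rw [hsum_eq, h]
      have hv := h2 h
      have ht0 : (0:ℝ) < t := ht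
      nlinarith
    · have hcont : Filter.Tendsto (fun t : ℝ => (∑ i, z i) + t * ∑ i, v i) (nhds 0)
          (nhds (∑ i, z i)) := by
        have h' : Filter.Tendsto (fun t : ℝ => (∑ i, z i) + t * ∑ i, v i) (nhds 0)
            (nhds ((∑ i, z i) + 0 * ∑ i, v i)) := (Continuous.tendsto (by continuity) 0)
        simpa using h'
      have hev : ∀ᶠ t in nhds (0:ℝ), (∑ i, z i) + t * ∑ i, v i ≤ R :=
        hcont.eventually (eventually_le_nhds h)
      exact (hev.filter_mono nhdsWithin_le_nhds).mono (fun t ht => by rw [hsum_eq]; exact ht)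
  filter_upwards [Filter.eventually_all.2 hco, hsum] with t ha hb
  exact ⟨fun i => ha i, hb⟩

set_option maxHeartbeats 1000000 in
lemma key (d : ℕ) (F G : Euc d → Euc d → Euc d) (r lam : ℝ) (hr : 0 < r) (hlam : 0 ≤ lam)
    (T : Euc d →L[ℝ] Euc d)
    (hyp1F : ∀ x ∈ Od d, ∀ p : Euc d, ∀ i, x i = 0 → F x p i ≤ 0)
    (R₀ : ℝ) (hR₀ : 0 < R₀)
    (hyp2F : ∀ x ∈ Od d, ∀ p : Euc d, R₀ ≤ ∑ i, x i → 0 ≤ ∑ i, F x p i)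
    (hyp2T : ∀ R ≥ R₀, ∀ x ∈ Ball1 d R, T x ∈ Ball1 d R)
    (hyp3 : ∀ x ∈ Od d, ∀ y ∈ Od d, ∀ p q : Euc d,
      0 ≤ ⟪G x p - G y q, x - y⟫ + ⟪F x p - F y q, p - q⟫)
    (U V : Euc d → Euc d) (hU : IsClassicalSolS d F G r lam T U)
    (hV : IsClassicalSolS d F G r lam T V) :
    ∀ x ∈ Od d, ∀ y ∈ Od d, 0 ≤ ⟪U x - V y, x - y⟫ := by
  intro x₀ hx₀ y₀ hy₀
  set R : ℝ := max R₀ (max (∑ i, x₀ i) (∑ i, y₀ i)) with hRdef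
  have hRR₀ : R₀ ≤ R := le_max_left _ _
  have hx₀R : x₀ ∈ Ball1 d R := ⟨hx₀, le_trans (le_max_left _ _) (le_max_right _ _)⟩
  have hy₀R : y₀ ∈ Ball1 d R := ⟨hy₀, le_trans (le_max_right _ _) (le_max_right _ _)⟩
  set Φ : Euc d × Euc d → ℝ := fun z => ⟪U z.1 - V z.2, z.1 - z.2⟫ with hΦdef
  have hUc : Continuous U := hU.1.continuous
  have hVc : Continuous V := hV.1.continuous
  have hΦc : Continuous Φ := by
    apply Continuous.inner
    · exact (hUc.comp continuous_fst).sub (hVc.comp continuous_snd)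
    · exact continuous_fst.sub continuous_snd
  have hK : IsCompact ((Ball1 d R) ×ˢ (Ball1 d R)) := (ball1_compact d R).prod (ball1_compact d R)
  have hne : ((Ball1 d R) ×ˢ (Ball1 d R)).Nonempty := ⟨(x₀, y₀), hx₀R, hy₀R⟩
  obtain ⟨zb, hzbK, hmin⟩ := hK.exists_isMinOn hne hΦc.continuousOn
  set xb := zb.1 with hxb
  set yb := zb.2 with hyb
  have hxbB : xb ∈ Ball1 d R := hzbK.1
  have hybB : yb ∈ Ball1 d R := hzbK.2
  have hxbO : xb ∈ Od d := hxbB.1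
  have hybO : yb ∈ Od d := hybB.1
  set p := U xb with hp
  set q := V yb with hq
  set f := F xb p with hf
  set g := F yb q with hg
  set a := ContinuousLinearMap.adjoint T (U (T xb)) with ha
  set b := ContinuousLinearMap.adjoint T (V (T yb)) with hb
  set m := Φ zb with hm
  -- suffices to show 0 ≤ m
  suffices hm0 : 0 ≤ m by
    have := hmin (Set.mk_mem_prod hx₀R hy₀R)
    calc (0:ℝ) ≤ m := hm0
      _ ≤ Φ (x₀, y₀) := this
  -- admissible directions
  have hvx : ∀ i, xb i = 0 → 0 ≤ (-f) i := by
    intro i hi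
    have := hyp1F xb hxbO p i hi
    simpa using neg_nonneg.mpr this
  have hvxs : ∑ i, xb i = R → ∑ i, (-f) i ≤ 0 := by
    intro hs
    have := hyp2F xb hxbO p (by rw [hs]; exact hRR₀)
    have : ∑ i, (-f : Euc d) i = -∑ i, f i := by simp
    rw [this]
    simp only [neg_nonpos]
    exact hyp2F xb hxbO p (by rw [hs]; exact hRR₀)
  have hvy : ∀ i, yb i = 0 → 0 ≤ (-g) i := by
    intro i hi
    simpa using neg_nonneg.mpr (hyp1F yb hybO q i hi)
  have hvys : ∑ i, yb i = R → ∑ i, (-g) i ≤ 0 := by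
    intro hs
    have h' : ∑ i, (-g : Euc d) i = -∑ i, g i := by simp
    rw [h']
    simp only [neg_nonpos]
    exact hyp2F yb hybO q (by rw [hs]; exact hRR₀)
  have hmemx := seg_mem d R xb (-f) hxbB hvx hvxs
  have hmemy := seg_mem d R yb (-g) hybB hvy hvys
  -- derivatives
  have hcx : HasDerivAt (fun t : ℝ => xb + t • (-f)) (-f) 0 := by
    simpa using ((hasDerivAt_id (0:ℝ)).smul_const (-f)).const_add xb
  have hcy : HasDerivAt (fun t : ℝ => yb + t • (-g)) (-g) 0 := by
    simpa using ((hasDerivAt_id (0:ℝ)).smul_const (-g)).const_add yb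
  have hUd : HasDerivAt (fun t : ℝ => U (xb + t • (-f))) (fderiv ℝ U xb (-f)) 0 := by
    have hfd : HasFDerivAt U (fderiv ℝ U xb) ((fun t : ℝ => xb + t • (-f)) 0) := by
      simpa using (hU.1.differentiable one_ne_zero xb).hasFDerivAt
    exact hfd.comp_hasDerivAt 0 hcx
  have hVd : HasDerivAt (fun t : ℝ => V (yb + t • (-g))) (fderiv ℝ V yb (-g)) 0 := by
    have hfd : HasFDerivAt V (fderiv ℝ V yb) ((fun t : ℝ => yb + t • (-g)) 0) := by
      simpa using (hV.1.differentiable one_ne_zero yb).hasFDerivAt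
    exact hfd.comp_hasDerivAt 0 hcy
  have hA : HasDerivAt (fun t : ℝ => U (xb + t • (-f)) - V (yb + t • (-g)))
      (fderiv ℝ U xb (-f) - fderiv ℝ V yb (-g)) 0 := hUd.sub hVd
  have hB : HasDerivAt (fun t : ℝ => (xb + t • (-f)) - (yb + t • (-g))) (-f - -g) 0 :=
    hcx.sub hcy
  have hh := hA.inner ℝ hB
  -- h t = Φ (xb + t•(-f), yb + t•(-g))
  set D : ℝ := ⟪U (xb + (0:ℝ) • (-f)) - V (yb + (0:ℝ) • (-g)), -f - -g⟫
      + ⟪fderiv ℝ U xb (-f) - fderiv ℝ V yb (-g), (xb + (0:ℝ) • (-f)) - (yb + (0:ℝ) • (-g))⟫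
      with hD
  have hD0 : 0 ≤ D := by
    apply deriv_nonneg_of_right_min hh
    filter_upwards [hmemx, hmemy] with t htx hty
    have h0 : (⟪U (xb + (0:ℝ) • (-f)) - V (yb + (0:ℝ) • (-g)),
        (xb + (0:ℝ) • (-f)) - (yb + (0:ℝ) • (-g))⟫ : ℝ) = m := by
      rw [zero_smul, zero_smul, add_zero, add_zero]
    rw [h0]
    exact hmin (Set.mk_mem_prod htx hty)
  -- PDE vector identities
  have hUvec : fderiv ℝ U xb f = G xb p - r • p - lam • (p - a) := by
    ext i
    have hpde := hU.2 xb hxbO i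
    rw [← hp, ← hf, ← ha] at hpde
    have hco := fderiv_coord d U hU.1 xb f i
    show fderiv ℝ U xb f i = (G xb p - r • p - lam • (p - a)) i
    simp only [PiLp.sub_apply, PiLp.smul_apply, smul_eq_mul]
    rw [← hco]
    linarith [hpde]
  have hVvec : fderiv ℝ V yb g = G yb q - r • q - lam • (q - b) := by
    ext i
    have hpde := hV.2 yb hybO i
    rw [← hq, ← hg, ← hb] at hpde
    have hco := fderiv_coord d V hV.1 yb g i
    show fderiv ℝ V yb g i = (G yb q - r • q - lam • (q - b)) i
    simp only [PiLp.sub_apply, PiLp.smul_apply, smul_eq_mul]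
    rw [← hco]
    linarith [hpde]
  have hDeq : D = ⟪p - q, g - f⟫
      + ⟪(G yb q - r • q - lam • (q - b)) - (G xb p - r • p - lam • (p - a)), xb - yb⟫ := by
    rw [hD, zero_smul, zero_smul, add_zero, add_zero,
      (fderiv ℝ U xb).map_neg, (fderiv ℝ V yb).map_neg, hUvec, hVvec]
    congr 1
    · show (⟪p - q, -f - -g⟫ : ℝ) = _
      congr 1
      abel
    · congr 1
      abel
  have e1 : (⟪p - q, g - f⟫ : ℝ) = -⟪f - g, p - q⟫ := by
    rw [real_inner_comm, show (g - f) = -(f - g) from (neg_sub f g).symm, inner_neg_left]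
  have hDval : D = -⟪f - g, p - q⟫ - ⟪G xb p - G yb q, xb - yb⟫
      + (r + lam) * ⟪p - q, xb - yb⟫ - lam * ⟪a - b, xb - yb⟫ := by
    rw [hDeq, e1]
    simp only [inner_sub_left, real_inner_smul_left]
    ring
  have hmval : m = ⟪p - q, xb - yb⟫ := rfl
  have hM := hyp3 xb hxbO yb hybO p q
  rw [← hf, ← hg] at hM
  have hTmem : (T xb, T yb) ∈ Ball1 d R ×ˢ Ball1 d R :=
    Set.mk_mem_prod (hyp2T R hRR₀ xb hxbB) (hyp2T R hRR₀ yb hybB)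
  have hΦT : m ≤ ⟪U (T xb) - V (T yb), T xb - T yb⟫ := hmin hTmem
  have hadj : (⟪a - b, xb - yb⟫ : ℝ) = ⟪U (T xb) - V (T yb), T xb - T yb⟫ := by
    rw [ha, hb, ← map_sub (ContinuousLinearMap.adjoint T),
      ContinuousLinearMap.adjoint_inner_left, map_sub]
  have hlm : lam * m ≤ lam * ⟪a - b, xb - yb⟫ := by
    rw [hadj]
    exact mul_le_mul_of_nonneg_left hΦT hlam
  have hrm : 0 ≤ r * m := by
    rw [hDval] at hD0
    rw [hmval]
    nlinarith [hM, hlm, hD0, hmval]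
  nlinarith [hrm, hr]


set_option maxHeartbeats 1000000 in
/-- Under Hypotheses 1, 2, 3 there is at most one classical solution of the stationary master
equation, and any classical solution is a monotone map on `O_d`. -/
theorem uniqueness_and_monotonicity_classical_stationary
    (d : ℕ) (hd : 1 ≤ d)
    (F G : Euc d → Euc d → Euc d)
    (hFc : Continuous fun q : Euc d × Euc d => F q.1 q.2)
    (hGc : Continuous fun q : Euc d × Euc d => G q.1 q.2)
    (r lam : ℝ) (hr : 0 < r) (hlam : 0 ≤ lam) (T : Euc d →L[ℝ] Euc d)
    -- Hypothesis 1
    (hyp1F : ∀ x ∈ Od d, ∀ p : Euc d, ∀ i, x i = 0 → F x p i ≤ 0)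
    (hyp1T : ∀ x ∈ Od d, T x ∈ Od d)
    -- Hypothesis 2
    (R₀ : ℝ) (hR₀ : 0 < R₀)
    (hyp2F : ∀ x ∈ Od d, ∀ p : Euc d, R₀ ≤ ∑ i, x i → 0 ≤ ∑ i, F x p i)
    (hyp2T : ∀ R ≥ R₀, ∀ x ∈ Ball1 d R, T x ∈ Ball1 d R)
    -- Hypothesis 3
    (hyp3 : ∀ x ∈ Od d, ∀ y ∈ Od d, ∀ p q : Euc d,
      0 ≤ ⟪G x p - G y q, x - y⟫ + ⟪F x p - F y q, p - q⟫) :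
    (∀ U V : Euc d → Euc d, IsClassicalSolS d F G r lam T U →
        IsClassicalSolS d F G r lam T V → ∀ x ∈ Od d, U x = V x) ∧
    (∀ U : Euc d → Euc d, IsClassicalSolS d F G r lam T U →
        ∀ x ∈ Od d, ∀ y ∈ Od d, 0 ≤ ⟪U x - U y, x - y⟫) := by
  constructor
  · intro U V hU hV
    have huv := key d F G r lam hr hlam T hyp1F R₀ hR₀ hyp2F hyp2T hyp3 U V hU hV
    -- interior case
    have hint : ∀ x : Euc d, (∀ i, 0 < x i) → U x = V x := by
      intro x hx
      set w : Euc d := U x - V x with hw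
      have hOd : x ∈ Od d := fun i => (hx i).le
      have happ : ∀ (t : ℝ) i, (x + t • w) i = x i + t * w i := fun t i => rfl
      have hev : ∀ᶠ t in nhdsWithin (0:ℝ) (Set.Ioi 0), x + t • w ∈ Od d := by
        have hco : ∀ i, ∀ᶠ t in nhdsWithin (0:ℝ) (Set.Ioi 0), 0 ≤ (x + t • w) i := by
          intro i
          have hcont : Filter.Tendsto (fun t : ℝ => x i + t * w i) (nhds 0) (nhds (x i)) := by
            have h' : Filter.Tendsto (fun t : ℝ => x i + t * w i) (nhds 0)
                (nhds (x i + 0 * w i)) := (Continuous.tendsto (by continuity) 0)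
            simpa using h'
          have hev' : ∀ᶠ t in nhds (0:ℝ), 0 ≤ x i + t * w i :=
            hcont.eventually (eventually_ge_nhds (hx i))
          exact (hev'.filter_mono nhdsWithin_le_nhds).mono fun t ht => by rw [happ]; exact ht
        exact (Filter.eventually_all.2 hco).mono fun t ht i => ht i
      have hineq : ∀ᶠ t in nhdsWithin (0:ℝ) (Set.Ioi 0),
          (⟪U x - V (x + t • w), w⟫ : ℝ) ≤ 0 := by
        filter_upwards [hev, self_mem_nhdsWithin] with t ht ht0
        have hkey := huv x hOd (x + t • w) ht
        have e : x - (x + t • w) = (-t) • w := by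
          rw [neg_smul]; abel
        rw [e, real_inner_smul_right] at hkey
        have ht0' : (0:ℝ) < t := ht0
        nlinarith [hkey]
      have hcont : Filter.Tendsto (fun t : ℝ => (⟪U x - V (x + t • w), w⟫ : ℝ))
          (nhdsWithin (0:ℝ) (Set.Ioi 0)) (nhds (⟪U x - V x, w⟫ : ℝ)) := by
        have hc : Continuous fun t : ℝ => (⟪U x - V (x + t • w), w⟫ : ℝ) := by
          apply Continuous.inner
          · exact continuous_const.sub (hV.1.continuous.comp
              (continuous_const.add (continuous_id.smul continuous_const)))
          · exact continuous_const
        have h0 := hc.tendsto 0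
        simp only [zero_smul, add_zero] at h0
        exact h0.mono_left nhdsWithin_le_nhds
      have hle : (⟪U x - V x, w⟫ : ℝ) ≤ 0 := le_of_tendsto hcont hineq
      have hww : (⟪w, w⟫ : ℝ) ≤ 0 := hle
      have : w = 0 := by
        have := real_inner_self_nonneg (x := w)
        have h0 : (⟪w, w⟫ : ℝ) = 0 := le_antisymm hww this
        exact inner_self_eq_zero.mp h0
      have := sub_eq_zero.mp this
      exact this
    -- boundary by density
    intro x hx
    set e : Euc d := (WithLp.equiv 2 (Fin d → ℝ)).symm 1 with he
    have heapp : ∀ i, e i = 1 := fun i => rfl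
    have hUVt : ∀ t : ℝ, 0 < t → U (x + t • e) = V (x + t • e) := by
      intro t ht
      apply hint
      intro i
      have : (x + t • e) i = x i + t * e i := rfl
      rw [this, heapp]
      have := hx i
      nlinarith
    have hevEq : ∀ᶠ t in nhdsWithin (0:ℝ) (Set.Ioi 0),
        U (x + t • e) = V (x + t • e) :=
      Filter.eventually_of_mem self_mem_nhdsWithin fun t ht => hUVt t ht
    have hcurve : Filter.Tendsto (fun t : ℝ => x + t • e) (nhdsWithin (0:ℝ) (Set.Ioi 0)) (nhds x) := by
      have hc : Continuous fun t : ℝ => x + t • e :=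
        continuous_const.add (continuous_id.smul continuous_const)
      have h0 := hc.tendsto 0
      simp only [zero_smul, add_zero] at h0
      exact h0.mono_left nhdsWithin_le_nhds
    have hUt : Filter.Tendsto (fun t : ℝ => U (x + t • e)) (nhdsWithin (0:ℝ) (Set.Ioi 0))
        (nhds (U x)) := (hU.1.continuous.tendsto x).comp hcurve
    have hVt : Filter.Tendsto (fun t : ℝ => V (x + t • e)) (nhdsWithin (0:ℝ) (Set.Ioi 0))
        (nhds (V x)) := (hV.1.continuous.tendsto x).comp hcurve
    exact tendsto_nhds_unique (hUt.congr' hevEq) hVt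
  · intro U hU x hx y hy
    exact key d F G r lam hr hlam T hyp1F R₀ hR₀ hyp2F hyp2T hyp3 U U hU hU x hx y hy
end
end

section
/- Assume Hypotheses 1 and 2. Then every C^1 classical solution of the stationary master equation is a monotone solution of the stationary master equation. -/
open scoped RealInnerProductSpace
noncomputable section

/-- Monotone solution of the stationary master equation (Definition 2.1), with threshold
`R₁ ≥ R₀` where `R₀` is the constant of Hypothesis 2. -/
def IsMonotoneSolS (d : ℕ) (F G : Euc d → Euc d → Euc d) (r lam : ℝ)
    (T : Euc d →L[ℝ] Euc d) (R₀ : ℝ) (U : Euc d → Euc d) : Prop :=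
  ContinuousOn U (Od d) ∧
  ∃ R₁ ≥ R₀, ∀ R ≥ R₁, ∀ V : Euc d, ∀ y ∈ Od d, ∀ x₀ ∈ Ball1 d R,
    (∀ x ∈ Ball1 d R, x ≠ x₀ → ⟪U x₀ - V, x₀ - y⟫ < ⟪U x - V, x - y⟫) →
    ⟪G x₀ (U x₀), x₀ - y⟫ + ⟪F x₀ (U x₀), U x₀ - V⟫ ≤
      r * ⟪U x₀, x₀ - y⟫
        + lam * ⟪U x₀ - ContinuousLinearMap.adjoint T (U (T x₀)), x₀ - y⟫

/-- Under Hypotheses 1 and 2, every C¹ classical solution of the stationary master equation is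
a monotone solution of the stationary master equation. -/
theorem classical_implies_monotone_stationary
    (d : ℕ) (hd : 1 ≤ d)
    (F G : Euc d → Euc d → Euc d)
    (hFc : Continuous fun q : Euc d × Euc d => F q.1 q.2)
    (hGc : Continuous fun q : Euc d × Euc d => G q.1 q.2)
    (r lam : ℝ) (hr : 0 < r) (hlam : 0 ≤ lam) (T : Euc d →L[ℝ] Euc d)
    -- Hypothesis 1
    (hyp1F : ∀ x ∈ Od d, ∀ p : Euc d, ∀ i, x i = 0 → F x p i ≤ 0)
    (hyp1T : ∀ x ∈ Od d, T x ∈ Od d)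
    -- Hypothesis 2
    (R₀ : ℝ) (hR₀ : 0 < R₀)
    (hyp2F : ∀ x ∈ Od d, ∀ p : Euc d, R₀ ≤ ∑ i, x i → 0 ≤ ∑ i, F x p i)
    (hyp2T : ∀ R ≥ R₀, ∀ x ∈ Ball1 d R, T x ∈ Ball1 d R)
    (U : Euc d → Euc d) (hU : IsClassicalSolS d F G r lam T U) :
    IsMonotoneSolS d F G r lam T R₀ U := by
  obtain ⟨hsm, heq⟩ := hU
  refine ⟨hsm.continuous.continuousOn, R₀, le_refl _, ?_⟩
  intro R hR V y hy x₀ hx₀ hmin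
  set Fv : Euc d := F x₀ (U x₀) with hFv
  have hdiff : DifferentiableAt ℝ U x₀ := (hsm.differentiable one_ne_zero) x₀
  set DU : Euc d →L[ℝ] Euc d := fderiv ℝ U x₀ with hDUdef
  have hDU : HasFDerivAt U DU x₀ := hdiff.hasFDerivAt
  -- the path γ
  set γ : ℝ → Euc d := fun t => x₀ - t • Fv with hγdef
  have hγ0 : γ 0 = x₀ := by simp [hγdef]
  have hγi : ∀ t i, γ t i = x₀ i - t * Fv i := by
    intro t i
    simp [hγdef, PiLp.sub_apply, PiLp.smul_apply, smul_eq_mul]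
  have hγd : HasDerivAt γ (-Fv) 0 := by
    have h1 : HasDerivAt (fun t : ℝ => t • Fv) Fv 0 := by
      simpa using (hasDerivAt_id (0:ℝ)).smul_const Fv
    simpa [hγdef] using h1.const_sub x₀
  -- derivative of φ(t) = ⟪U (γ t) - V, γ t - y⟫
  have hUγ : HasDerivAt (fun t => U (γ t)) (DU (-Fv)) 0 := by
    have hDU' : HasFDerivAt U DU (γ 0) := by rw [hγ0]; exact hDU
    exact hDU'.comp_hasDerivAt 0 hγd
  have hf : HasDerivAt (fun t => U (γ t) - V) (DU (-Fv)) 0 := hUγ.sub_const V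
  have hg : HasDerivAt (fun t => γ t - y) (-Fv) 0 := hγd.sub_const y
  have hφ : HasDerivAt (fun t => ⟪U (γ t) - V, γ t - y⟫)
      (⟪U x₀ - V, -Fv⟫ + ⟪DU (-Fv), x₀ - y⟫) 0 := by
    have := hf.inner ℝ hg
    simpa [hγ0] using this
  -- eventually γ t ∈ Ball1 d R for t > 0 small
  have hev : ∀ᶠ t in nhdsWithin (0:ℝ) (Set.Ioi 0), γ t ∈ Ball1 d R := by
    have h1 : ∀ᶠ t in nhdsWithin (0:ℝ) (Set.Ioi 0), ∀ i, 0 ≤ γ t i := by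
      rw [Filter.eventually_all]
      intro i
      by_cases hzero : x₀ i = 0
      · have hF : Fv i ≤ 0 := hyp1F x₀ hx₀.1 (U x₀) i hzero
        filter_upwards [self_mem_nhdsWithin] with t ht
        rw [hγi, hzero]
        have : (0:ℝ) < t := ht
        nlinarith
      · have hpos : 0 < x₀ i := lt_of_le_of_ne (hx₀.1 i) (Ne.symm hzero)
        have hc : Filter.Tendsto (fun t : ℝ => x₀ i - t * Fv i) (nhds 0)
            (nhds (x₀ i - 0 * Fv i)) := by
          exact Filter.Tendsto.sub tendsto_const_nhds
            ((continuous_id.mul continuous_const).tendsto 0)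
        have hev' : ∀ᶠ t in nhds (0:ℝ), 0 < x₀ i - t * Fv i :=
          hc.eventually (eventually_gt_nhds (by simpa using hpos))
        filter_upwards [nhdsWithin_le_nhds hev'] with t ht
        rw [hγi]; exact le_of_lt ht
    have h2 : ∀ᶠ t in nhdsWithin (0:ℝ) (Set.Ioi 0), ∑ i, γ t i ≤ R := by
      have hsumγ : ∀ t : ℝ, ∑ i, γ t i = (∑ i, x₀ i) - t * ∑ i, Fv i := by
        intro t
        rw [Finset.mul_sum, ← Finset.sum_sub_distrib]
        exact Finset.sum_congr rfl fun i _ => hγi t i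
      rcases lt_or_eq_of_le hx₀.2 with hlt | heqR
      · have hc : Filter.Tendsto (fun t : ℝ => (∑ i, x₀ i) - t * ∑ i, Fv i) (nhds 0)
            (nhds ((∑ i, x₀ i) - 0 * ∑ i, Fv i)) :=
          Filter.Tendsto.sub tendsto_const_nhds
            ((continuous_id.mul continuous_const).tendsto 0)
        have hev' : ∀ᶠ t in nhds (0:ℝ), (∑ i, x₀ i) - t * ∑ i, Fv i < R :=
          hc.eventually (eventually_lt_nhds (by simpa using hlt))
        filter_upwards [nhdsWithin_le_nhds hev'] with t ht
        rw [hsumγ]; exact le_of_lt ht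
      · have hSF : 0 ≤ ∑ i, Fv i := by
          apply hyp2F x₀ hx₀.1 (U x₀)
          rw [heqR]; exact le_trans hR (le_refl R)
        filter_upwards [self_mem_nhdsWithin] with t ht
        rw [hsumγ, heqR]
        have : (0:ℝ) < t := ht
        nlinarith
    filter_upwards [h1, h2] with t ht1 ht2
    exact ⟨ht1, ht2⟩
  -- one-sided minimality gives nonneg slope
  have hφ0 : (fun t => ⟪U (γ t) - V, γ t - y⟫) 0 = ⟪U x₀ - V, x₀ - y⟫ := by
    simp [hγ0]
  have hslope : ∀ᶠ t in nhdsWithin (0:ℝ) (Set.Ioi 0),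
      0 ≤ slope (fun t => ⟪U (γ t) - V, γ t - y⟫) 0 t := by
    filter_upwards [hev, self_mem_nhdsWithin] with t hmem ht
    have htpos : (0:ℝ) < t := ht
    have hle : ⟪U x₀ - V, x₀ - y⟫ ≤ ⟪U (γ t) - V, γ t - y⟫ := by
      by_cases hne : γ t = x₀
      · rw [hne]
      · exact le_of_lt (hmin (γ t) hmem hne)
    rw [slope_def_field]
    rw [div_eq_mul_inv]
    apply mul_nonneg
    · rw [hγ0]; linarith
    · simp [le_of_lt htpos]
  have hten : Filter.Tendsto (slope (fun t => ⟪U (γ t) - V, γ t - y⟫) 0)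
      (nhdsWithin (0:ℝ) (Set.Ioi 0))
      (nhds (⟪U x₀ - V, -Fv⟫ + ⟪DU (-Fv), x₀ - y⟫)) := by
    have := hasDerivAt_iff_tendsto_slope.mp hφ
    exact this.mono_left (nhdsWithin_mono 0 (fun t ht => by
      simp only [Set.mem_compl_iff, Set.mem_singleton_iff]
      exact ne_of_gt ht))
  have key0 : 0 ≤ ⟪U x₀ - V, -Fv⟫ + ⟪DU (-Fv), x₀ - y⟫ :=
    ge_of_tendsto hten hslope
  have key : ⟪Fv, U x₀ - V⟫ + ⟪DU Fv, x₀ - y⟫ ≤ 0 := by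
    have h1 : ⟪U x₀ - V, -Fv⟫ = -⟪Fv, U x₀ - V⟫ := by
      rw [inner_neg_right, real_inner_comm]
    have h2 : ⟪DU (-Fv), x₀ - y⟫ = -⟪DU Fv, x₀ - y⟫ := by
      rw [map_neg, inner_neg_left]
    rw [h1, h2] at key0
    linarith
  -- coordinate derivative identification
  have hcoord : ∀ i, fderiv ℝ (fun z : Euc d => U z i) x₀ Fv = DU Fv i := by
    intro i
    have hp : HasFDerivAt (fun z : Euc d => U z i)
        ((EuclideanSpace.proj i : Euc d →L[ℝ] ℝ).comp DU) x₀ :=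
      (EuclideanSpace.proj i : Euc d →L[ℝ] ℝ).hasFDerivAt.comp x₀ hDU
    rw [hp.fderiv]
    rfl
  have hEq : ∀ i, r * U x₀ i + DU Fv i
      + lam * (U x₀ i - ContinuousLinearMap.adjoint T (U (T x₀)) i)
      = G x₀ (U x₀) i := by
    intro i
    rw [← hcoord i]
    exact heq x₀ hx₀.1 i
  -- final algebra
  simp only [PiLp.inner_apply, RCLike.inner_apply, starRingEnd_apply, star_trivial,
    PiLp.sub_apply] at key ⊢
  have hsum : ∑ i, G x₀ (U x₀) i * (x₀ i - y i)
      = r * ∑ i, U x₀ i * (x₀ i - y i) + ∑ i, DU Fv i * (x₀ i - y i)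
        + lam * ∑ i, (U x₀ i - ContinuousLinearMap.adjoint T (U (T x₀)) i) * (x₀ i - y i) := by
    rw [Finset.mul_sum, Finset.mul_sum, ← Finset.sum_add_distrib, ← Finset.sum_add_distrib]
    refine Finset.sum_congr rfl fun i _ => ?_
    rw [← hEq i]; ring
  have e1 : ∑ i, (x₀ i - y i) * G x₀ (U x₀) i = ∑ i, G x₀ (U x₀) i * (x₀ i - y i) :=
    Finset.sum_congr rfl fun i _ => mul_comm _ _
  have e2 : ∑ i, (x₀ i - y i) * U x₀ i = ∑ i, U x₀ i * (x₀ i - y i) :=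
    Finset.sum_congr rfl fun i _ => mul_comm _ _
  have e3 : ∑ i, (x₀ i - y i) * DU Fv i = ∑ i, DU Fv i * (x₀ i - y i) :=
    Finset.sum_congr rfl fun i _ => mul_comm _ _
  have e4 : ∑ i, (x₀ i - y i) * (U x₀ i - ContinuousLinearMap.adjoint T (U (T x₀)) i)
      = ∑ i, (U x₀ i - ContinuousLinearMap.adjoint T (U (T x₀)) i) * (x₀ i - y i) :=
    Finset.sum_congr rfl fun i _ => mul_comm _ _
  rw [e1, e2, e4]
  rw [e3] at key
  linarith [hsum, key]
end
end
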